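/- If a module spectral sequence Ẽ over a multiplicative spectral sequence E satisfies that Ẽ_1^{*,*} is a Noetherian module over a bigraded commutative algebra A^{*,*} of even-total-degree permanent cycles acting through φ : A → E_1, then Ẽ_∞^* is a finitely generated E_∞^*-module. -/

import Mathlib

open CategoryTheory

/-- A multiplicative spectral sequence of `k`-algebras, concentrated in the half plane
`p + q ≥ 0`, starting at its `E_1`-page.  `E r` denotes the page `E_{r+1}`, so the
differential on `E r` has bidegree `(r+1, -r)`.  The limit term `E_∞` is encoded by
`Einf`, together with the map `pinf` assigning to every permanent cycle (a compatible
sequence of classes on all pages) its stable value in `E_∞`. -/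
structure MultSS (k : Type) [Field k] where
  /-- the pages: `E r` is the page `E_{r+1}` -/
  E : ℕ → ℤ → ℤ → ModuleCat k
  /-- concentration in the half plane `p + q ≥ 0` -/
  halfplane : ∀ r p q, p + q < 0 → Subsingleton (E r p q)
  /-- the multiplication on each page -/
  mul : ∀ {r : ℕ} {p q p' q' : ℤ}, E r p q →ₗ[k] E r p' q' →ₗ[k] E r (p + p') (q + q')
  /-- the unit of each page -/
  one : ∀ r, E r 0 0
  mul_assoc : ∀ {r : ℕ} {p₁ q₁ p₂ q₂ p₃ q₃ : ℤ} (x : E r p₁ q₁) (y : E r p₂ q₂)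
    (z : E r p₃ q₃), HEq (mul (mul x y) z) (mul x (mul y z))
  one_mul : ∀ {r : ℕ} {p q : ℤ} (x : E r p q), HEq (mul (one r) x) x
  mul_one : ∀ {r : ℕ} {p q : ℤ} (x : E r p q), HEq (mul x (one r)) x
  /-- the differentials -/
  d : ∀ r p q, E r p q →ₗ[k] E r (p + (r + 1)) (q - r)
  d_squared : ∀ r p q (x : E r p q), d r _ _ (d r p q x) = 0
  /-- the graded Leibniz rule -/
  leibniz : ∀ (r : ℕ) (p q p' q' : ℤ) (x : E r p q) (y : E r p' q'),
    d r _ _ (mul x y) =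
      cast (by rw [show p + (r+1) + p' = p + p' + (r+1) from by ring,
        show q - r + q' = q + q' - r from by ring] :
          (E r (p + (r+1) + p') (q - r + q') : Type) = E r (p + p' + (r+1)) (q + q' - r))
        (mul (d r p q x) y) +
      cast (by rw [show p + (p' + (r+1)) = p + p' + (r+1) from by ring,
        show q + (q' - r) = q + q' - r from by ring] :
          (E r (p + (p' + (r+1))) (q + (q' - r)) : Type) = E r (p + p' + (r+1)) (q + q' - r))
        ((((p + q).negOnePow : ℤˣ) : ℤ) • mul x (d r p' q' y))
  /-- passage to the next page: every class killed by the differential has a residue -/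
  proj : ∀ r p q (x : E r p q), d r p q x = 0 → E (r + 1) p q
  proj_add : ∀ r p q (x y : E r p q) (hx : d r p q x = 0) (hy : d r p q y = 0)
    (hxy : d r p q (x + y) = 0), proj r p q (x + y) hxy = proj r p q x hx + proj r p q y hy
  proj_smul : ∀ r p q (c : k) (x : E r p q) (hx : d r p q x = 0)
    (hcx : d r p q (c • x) = 0), proj r p q (c • x) hcx = c • proj r p q x hx
  proj_one : ∀ r (h : d r 0 0 (one r) = 0), proj r 0 0 (one r) h = one (r + 1)
  proj_mul : ∀ r p q p' q' (x : E r p q) (y : E r p' q') (hx : d r p q x = 0)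
    (hy : d r p' q' y = 0) (hxy : d r _ _ (mul x y) = 0),
    proj r _ _ (mul x y) hxy = mul (proj r p q x hx) (proj r p' q' y hy)
  proj_surjective : ∀ r p q (y : E (r + 1) p q), ∃ x h, proj r p q x h = y
  /-- the kernel of the passage to the next page consists of the boundaries -/
  proj_eq_zero_iff : ∀ r p q (x : E r p q) (h : d r p q x = 0),
    proj r p q x h = 0 ↔ ∃ w : E r (p - (r + 1)) (q + r),
      d r _ _ w = cast (by rw [show p - (r+1) + (r+1) = p from by ring,
        show q + r - r = q from by ring] :
          (E r p q : Type) = E r (p - (r+1) + (r+1)) (q + r - r)) x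
  /-- the limit page `E_∞` -/
  Einf : ℤ → ℤ → ModuleCat k
  mulInf : ∀ {p q p' q' : ℤ}, Einf p q →ₗ[k] Einf p' q' →ₗ[k] Einf (p + p') (q + q')
  /-- the stable value in `E_∞` of a permanent cycle, given as the compatible sequence
  of its residues on all pages -/
  pinf : ∀ p q (c : ∀ s, E s p q),
    (∀ s, ∃ h : d s p q (c s) = 0, proj s p q (c s) h = c (s + 1)) → Einf p q
  pinf_surjective : ∀ p q (y : Einf p q), ∃ c hc, pinf p q c hc = y
  pinf_eq_zero_iff : ∀ p q c hc, pinf p q c hc = 0 ↔ ∃ s, c s = 0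
  pinf_add : ∀ p q c c' hc hc' hcc',
    pinf p q (fun s => c s + c' s) hcc' = pinf p q c hc + pinf p q c' hc'
  pinf_smul : ∀ p q (a : k) c hc hac,
    pinf p q (fun s => a • c s) hac = a • pinf p q c hc
  pinf_mul : ∀ p q p' q' c hc c' hc' hcc',
    pinf (p + p') (q + q') (fun s => mul (c s) (c' s)) hcc' =
      mulInf (pinf p q c hc) (pinf p' q' c' hc')

/-- A spectral sequence `Ẽ` which is a bigraded module over the multiplicative spectral
sequence `SS`; again `F r` denotes the page `Ẽ_{r+1}`, and `Finf` the limit term. -/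
structure ModSS (k : Type) [Field k] (SS : MultSS k) where
  F : ℕ → ℤ → ℤ → ModuleCat k
  /-- the module structure of each page over the corresponding page of `SS` -/
  smul : ∀ {r : ℕ} {p q p' q' : ℤ}, SS.E r p q →ₗ[k] F r p' q' →ₗ[k] F r (p + p') (q + q')
  one_smul : ∀ {r : ℕ} {p q : ℤ} (m : F r p q), HEq (smul (SS.one r) m) m
  mul_smul : ∀ {r : ℕ} {p₁ q₁ p₂ q₂ p₃ q₃ : ℤ} (x : SS.E r p₁ q₁) (y : SS.E r p₂ q₂)
    (m : F r p₃ q₃), HEq (smul (SS.mul x y) m) (smul x (smul y m))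
  dF : ∀ r p q, F r p q →ₗ[k] F r (p + (r + 1)) (q - r)
  dF_squared : ∀ r p q (m : F r p q), dF r _ _ (dF r p q m) = 0
  /-- the graded Leibniz rule for the module structure -/
  leibnizF : ∀ (r : ℕ) (p q p' q' : ℤ) (x : SS.E r p q) (m : F r p' q'),
    dF r _ _ (smul x m) =
      cast (by rw [show p + (r+1) + p' = p + p' + (r+1) from by ring,
        show q - r + q' = q + q' - r from by ring] :
          (F r (p + (r+1) + p') (q - r + q') : Type) = F r (p + p' + (r+1)) (q + q' - r))
        (smul (SS.d r p q x) m) +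
      cast (by rw [show p + (p' + (r+1)) = p + p' + (r+1) from by ring,
        show q + (q' - r) = q + q' - r from by ring] :
          (F r (p + (p' + (r+1))) (q + (q' - r)) : Type) = F r (p + p' + (r+1)) (q + q' - r))
        ((((p + q).negOnePow : ℤˣ) : ℤ) • smul x (dF r p' q' m))
  projF : ∀ r p q (m : F r p q), dF r p q m = 0 → F (r + 1) p q
  projF_add : ∀ r p q (x y : F r p q) (hx : dF r p q x = 0) (hy : dF r p q y = 0)
    (hxy : dF r p q (x + y) = 0),
    projF r p q (x + y) hxy = projF r p q x hx + projF r p q y hy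
  projF_smulk : ∀ r p q (c : k) (x : F r p q) (hx : dF r p q x = 0)
    (hcx : dF r p q (c • x) = 0), projF r p q (c • x) hcx = c • projF r p q x hx
  projF_smul : ∀ r p q p' q' (x : SS.E r p q) (m : F r p' q') (hx : SS.d r p q x = 0)
    (hm : dF r p' q' m = 0) (hxm : dF r _ _ (smul x m) = 0),
    projF r _ _ (smul x m) hxm = smul (SS.proj r p q x hx) (projF r p' q' m hm)
  projF_surjective : ∀ r p q (y : F (r + 1) p q), ∃ m h, projF r p q m h = y
  projF_eq_zero_iff : ∀ r p q (m : F r p q) (h : dF r p q m = 0),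
    projF r p q m h = 0 ↔ ∃ w : F r (p - (r + 1)) (q + r),
      dF r _ _ w = cast (by rw [show p - (r+1) + (r+1) = p from by ring,
        show q + r - r = q from by ring] :
          (F r p q : Type) = F r (p - (r+1) + (r+1)) (q + r - r)) m
  Finf : ℤ → ℤ → ModuleCat k
  smulInf : ∀ {p q p' q' : ℤ}, SS.Einf p q →ₗ[k] Finf p' q' →ₗ[k] Finf (p + p') (q + q')
  pinfF : ∀ p q (c : ∀ s, F s p q),
    (∀ s, ∃ h : dF s p q (c s) = 0, projF s p q (c s) h = c (s + 1)) → Finf p q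
  pinfF_surjective : ∀ p q (y : Finf p q), ∃ c hc, pinfF p q c hc = y
  pinfF_eq_zero_iff : ∀ p q c hc, pinfF p q c hc = 0 ↔ ∃ s, c s = 0
  pinfF_add : ∀ p q c c' hc hc' hcc',
    pinfF p q (fun s => c s + c' s) hcc' = pinfF p q c hc + pinfF p q c' hc'
  pinfF_smulk : ∀ p q (a : k) c hc hac,
    pinfF p q (fun s => a • c s) hac = a • pinfF p q c hc
  pinfF_smul : ∀ p q p' q' (c : ∀ s, SS.E s p q) hc (c' : ∀ s, F s p' q') hc' hcc',
    pinfF (p + p') (q + q') (fun s => smul (c s) (c' s)) hcc' =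
      smulInf (SS.pinf p q c hc) (pinfF p' q' c' hc')

variable (k : Type) [Field k]

/-- An `𝒜`-invariant family of graded `k`-submodules of the `Ẽ_1`-page of a module
spectral sequence. -/
def IsInvFamilyF1 (SS : MultSS k) (FS : ModSS k SS) {Atot : Type} [CommRing Atot]
    [Algebra k Atot] (𝒜 : ℤ × ℤ → Submodule k Atot)
    (φ : ∀ pq : ℤ × ℤ, 𝒜 pq →ₗ[k] SS.E 0 pq.1 pq.2)
    (N : ∀ p q : ℤ, Submodule k (FS.F 0 p q)) : Prop :=
  ∀ (pq : ℤ × ℤ) (a : 𝒜 pq) (p q : ℤ) (x : FS.F 0 p q),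
    x ∈ N p q → FS.smul (φ pq a) x ∈ N (pq.1 + p) (pq.2 + q)

section Aux

variable {k : Type} [Field k] {SS : MultSS k}

namespace ModSS

variable (FS : ModSS k SS)

/-- `Surv p q r m x` : `x ∈ Ẽ_{r+1}^{p,q}` is the `r`-th iterated residue of
`m ∈ Ẽ_1^{p,q}`. -/
def Surv (p q : ℤ) : (r : ℕ) → FS.F 0 p q → FS.F r p q → Prop
  | 0, m, x => x = m
  | r+1, m, x => ∃ (y : FS.F r p q) (h : FS.dF r p q y = 0),
      Surv p q r m y ∧ x = FS.projF r p q y h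

theorem projF_congr (r : ℕ) (p q : ℤ) {x x' : FS.F r p q} (e : x = x')
    (h : FS.dF r p q x = 0) (h' : FS.dF r p q x' = 0) :
    FS.projF r p q x h = FS.projF r p q x' h' := by subst e; rfl

theorem projF_zero (r : ℕ) (p q : ℤ) (h : FS.dF r p q (0 : FS.F r p q) = 0) :
    FS.projF r p q 0 h = 0 := by
  have h0 : FS.dF r p q ((0:k) • (0 : FS.F r p q)) = 0 := by simpa using h
  rw [FS.projF_congr r p q (zero_smul k (0 : FS.F r p q)).symm h h0,
      FS.projF_smulk r p q 0 0 h h0, zero_smul]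

theorem Surv_unique (p q : ℤ) : ∀ (r : ℕ) (m : FS.F 0 p q) (x x' : FS.F r p q),
    FS.Surv p q r m x → FS.Surv p q r m x' → x = x'
  | 0, m, x, x', hx, hx' => by rw [show x = m from hx, show x' = m from hx']
  | r+1, m, x, x', ⟨y, h, hy, hx⟩, ⟨y', h', hy', hx'⟩ => by
      subst hx; subst hx'
      exact FS.projF_congr r p q (Surv_unique p q r m y y' hy hy') h h'

theorem Surv_zero (p q : ℤ) : ∀ r : ℕ, FS.Surv p q r (0 : FS.F 0 p q) 0
  | 0 => rfl
  | r+1 => ⟨0, map_zero _, Surv_zero p q r, (FS.projF_zero r p q _).symm⟩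

theorem Surv_add (p q : ℤ) : ∀ (r : ℕ) (m m' : FS.F 0 p q) (x x' : FS.F r p q),
    FS.Surv p q r m x → FS.Surv p q r m' x' → FS.Surv p q r (m + m') (x + x')
  | 0, m, m', x, x', hx, hx' => by
      rw [show x = m from hx, show x' = m' from hx']; rfl
  | r+1, m, m', x, x', ⟨y, h, hy, hx⟩, ⟨y', h', hy', hx'⟩ => by
      subst hx; subst hx'
      refine ⟨y + y', by rw [map_add, h, h', add_zero],
        Surv_add p q r m m' y y' hy hy', (FS.projF_add r p q y y' h h' _).symm⟩

theorem Surv_smulk (p q : ℤ) : ∀ (r : ℕ) (a : k) (m : FS.F 0 p q) (x : FS.F r p q),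
    FS.Surv p q r m x → FS.Surv p q r (a • m) (a • x)
  | 0, a, m, x, hx => by rw [show x = m from hx]; rfl
  | r+1, a, m, x, ⟨y, h, hy, hx⟩ => by
      subst hx
      refine ⟨a • y, by rw [map_smul, h, smul_zero],
        Surv_smulk p q r a m y hy, (FS.projF_smulk r p q a y h _).symm⟩

theorem Surv_of_compat (p q : ℤ) (c : ∀ s, FS.F s p q)
    (hc : ∀ s, ∃ h : FS.dF s p q (c s) = 0, FS.projF s p q (c s) h = c (s+1)) :
    ∀ r, FS.Surv p q r (c 0) (c r)
  | 0 => rfl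
  | r+1 => by
      obtain ⟨h, hp⟩ := hc r
      exact ⟨c r, h, Surv_of_compat p q c hc r, hp.symm⟩

theorem castF_zero (r : ℕ) {p q p' q' : ℤ} (h1 : p = p') (h2 : q = q')
    (h : (FS.F r p q : Type) = FS.F r p' q') :
    cast h (0 : FS.F r p q) = 0 := by subst h1; subst h2; exact cast_eq h 0

theorem dF_smul_zero (r : ℕ) (p q p' q' : ℤ) (e : SS.E r p q) (x : FS.F r p' q')
    (he : SS.d r p q e = 0) (hx : FS.dF r p' q' x = 0) :
    FS.dF r _ _ (FS.smul e x) = 0 := by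
  rw [FS.leibnizF r p q p' q' e x, he, hx]
  have e1 : FS.smul (0 : SS.E r (p+(r+1)) (q-r)) x = 0 := by rw [map_zero]; rfl
  have e2 : ((((p+q).negOnePow : ℤˣ) : ℤ)) • FS.smul e (0 : FS.F r (p'+(r+1)) (q'-r)) = 0 := by
    rw [map_zero, smul_zero]
  rw [e1, e2, FS.castF_zero r (by ring) (by ring), FS.castF_zero r (by ring) (by ring), add_zero]

theorem Surv_smul (A B p q : ℤ) (cE : ∀ s, SS.E s A B)
    (hcE : ∀ s, ∃ h : SS.d s A B (cE s) = 0, SS.proj s A B (cE s) h = cE (s+1)) :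
    ∀ (r : ℕ) (m : FS.F 0 p q) (x : FS.F r p q), FS.Surv p q r m x →
      FS.Surv (A + p) (B + q) r (FS.smul (cE 0) m) (FS.smul (cE r) x)
  | 0, m, x, hx => by rw [show x = m from hx]; rfl
  | r+1, m, x, ⟨y, h, hy, hx⟩ => by
      subst hx
      have hd : SS.d r A B (cE r) = 0 := (hcE r).choose
      have hsy : FS.dF r (A + p) (B + q) (FS.smul (cE r) y) = 0 :=
        FS.dF_smul_zero r A B p q (cE r) y hd h
      refine ⟨FS.smul (cE r) y, hsy, Surv_smul A B p q cE hcE r m y hy, ?_⟩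
      rw [FS.projF_smul r A B p q (cE r) y hd h hsy, (hcE r).choose_spec]

/-- The submodule of permanent cycles in `Ẽ_1^{p,q}`. -/
def Zinf (p q : ℤ) : Submodule k (FS.F 0 p q) where
  carrier := {m | ∀ r, ∃ x, FS.Surv p q r m x}
  add_mem' := fun hm hm' r => ⟨_, FS.Surv_add p q r _ _ _ _ (hm r).choose_spec (hm' r).choose_spec⟩
  zero_mem' := fun r => ⟨0, FS.Surv_zero p q r⟩
  smul_mem' := fun a m hm r => ⟨_, FS.Surv_smulk p q r a m _ (hm r).choose_spec⟩

theorem mem_Zinf (p q : ℤ) (m : FS.F 0 p q) :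
    m ∈ FS.Zinf p q ↔ ∀ r, ∃ x, FS.Surv p q r m x := Iff.rfl

/-- The canonical sequence of residues of a permanent cycle. -/
noncomputable def cseq (p q : ℤ) (m : FS.F 0 p q) (hm : ∀ r, ∃ x, FS.Surv p q r m x)
    (r : ℕ) : FS.F r p q := (hm r).choose

theorem cseq_surv (p q : ℤ) (m : FS.F 0 p q) (hm : ∀ r, ∃ x, FS.Surv p q r m x) (r : ℕ) :
    FS.Surv p q r m (FS.cseq p q m hm r) := (hm r).choose_spec

theorem cseq_zero_eq (p q : ℤ) (m : FS.F 0 p q) (hm : ∀ r, ∃ x, FS.Surv p q r m x) :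
    FS.cseq p q m hm 0 = m := FS.cseq_surv p q m hm 0

theorem cseq_compat (p q : ℤ) (m : FS.F 0 p q) (hm : ∀ r, ∃ x, FS.Surv p q r m x) :
    ∀ s, ∃ h : FS.dF s p q (FS.cseq p q m hm s) = 0,
      FS.projF s p q (FS.cseq p q m hm s) h = FS.cseq p q m hm (s+1) := by
  intro s
  obtain ⟨y, h, hy, hx⟩ := FS.cseq_surv p q m hm (s+1)
  have hys : y = FS.cseq p q m hm s := FS.Surv_unique p q s m _ _ hy (FS.cseq_surv p q m hm s)
  subst hys
  exact ⟨h, hx.symm⟩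

/-- The stable value of a permanent cycle in `Ẽ_∞`. -/
noncomputable def PhiF (p q : ℤ) (m : FS.F 0 p q) (hm : ∀ r, ∃ x, FS.Surv p q r m x) :
    FS.Finf p q := FS.pinfF p q (FS.cseq p q m hm) (FS.cseq_compat p q m hm)

theorem pinfF_congr (p q : ℤ) {c c' : ∀ s, FS.F s p q} (e : c = c') (hc hc') :
    FS.pinfF p q c hc = FS.pinfF p q c' hc' := by subst e; rfl

theorem PhiF_eq (p q : ℤ) (c : ∀ s, FS.F s p q)
    (hc : ∀ s, ∃ h : FS.dF s p q (c s) = 0, FS.projF s p q (c s) h = c (s+1))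
    (hm : ∀ r, ∃ x, FS.Surv p q r (c 0) x) :
    FS.pinfF p q c hc = FS.PhiF p q (c 0) hm := by
  have e : FS.cseq p q (c 0) hm = c := by
    funext r
    exact FS.Surv_unique p q r (c 0) _ _ (FS.cseq_surv p q (c 0) hm r)
      (FS.Surv_of_compat p q c hc r)
  exact (FS.pinfF_congr p q e _ hc).symm

theorem PhiF_zero (p q : ℤ) (hm : ∀ r, ∃ x, FS.Surv p q r (0 : FS.F 0 p q) x) :
    FS.PhiF p q 0 hm = 0 :=
  (FS.pinfF_eq_zero_iff p q _ _).mpr ⟨0, FS.cseq_zero_eq p q 0 hm⟩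

theorem PhiF_add (p q : ℤ) (m m' : FS.F 0 p q) (hm hm' hmm') :
    FS.PhiF p q (m + m') hmm' = FS.PhiF p q m hm + FS.PhiF p q m' hm' := by
  have e : FS.cseq p q (m + m') hmm' =
      fun s => FS.cseq p q m hm s + FS.cseq p q m' hm' s := by
    funext r
    exact FS.Surv_unique p q r (m + m') _ _ (FS.cseq_surv p q _ hmm' r)
      (FS.Surv_add p q r m m' _ _ (FS.cseq_surv p q m hm r) (FS.cseq_surv p q m' hm' r))
  rw [PhiF, FS.pinfF_congr p q e _ ?hcc]
  · exact FS.pinfF_add p q _ _ (FS.cseq_compat p q m hm) (FS.cseq_compat p q m' hm') _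
  case hcc =>
    simpa only [e] using FS.cseq_compat p q (m + m') hmm'

theorem PhiF_smulk (p q : ℤ) (a : k) (m : FS.F 0 p q) (hm ham) :
    FS.PhiF p q (a • m) ham = a • FS.PhiF p q m hm := by
  have e : FS.cseq p q (a • m) ham = fun s => a • FS.cseq p q m hm s := by
    funext r
    exact FS.Surv_unique p q r (a • m) _ _ (FS.cseq_surv p q _ ham r)
      (FS.Surv_smulk p q r a m _ (FS.cseq_surv p q m hm r))
  rw [PhiF, FS.pinfF_congr p q e _ ?hcc]
  · exact FS.pinfF_smulk p q a _ (FS.cseq_compat p q m hm) _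
  case hcc =>
    simpa only [e] using FS.cseq_compat p q (a • m) ham

theorem Zinf_mem_smul (A B p q : ℤ) (cE : ∀ s, SS.E s A B)
    (hcE : ∀ s, ∃ h : SS.d s A B (cE s) = 0, SS.proj s A B (cE s) h = cE (s+1))
    (m : FS.F 0 p q) (hm : ∀ r, ∃ x, FS.Surv p q r m x) :
    ∀ r, ∃ x, FS.Surv (A + p) (B + q) r (FS.smul (cE 0) m) x :=
  fun r => ⟨_, FS.Surv_smul A B p q cE hcE r m _ (FS.cseq_surv p q m hm r)⟩

theorem PhiF_smul (A B p q : ℤ) (cE : ∀ s, SS.E s A B)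
    (hcE : ∀ s, ∃ h : SS.d s A B (cE s) = 0, SS.proj s A B (cE s) h = cE (s+1))
    (m : FS.F 0 p q) (hm : ∀ r, ∃ x, FS.Surv p q r m x) (hsm) :
    FS.PhiF (A + p) (B + q) (FS.smul (cE 0) m) hsm
      = FS.smulInf (SS.pinf A B cE hcE) (FS.PhiF p q m hm) := by
  have e : FS.cseq (A + p) (B + q) (FS.smul (cE 0) m) hsm =
      fun s => FS.smul (cE s) (FS.cseq p q m hm s) := by
    funext r
    exact FS.Surv_unique (A + p) (B + q) r _ _ _ (FS.cseq_surv _ _ _ hsm r)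
      (FS.Surv_smul A B p q cE hcE r m _ (FS.cseq_surv p q m hm r))
  rw [PhiF, FS.pinfF_congr (A + p) (B + q) e _ ?hcc]
  · exact FS.pinfF_smul A B p q cE hcE _ (FS.cseq_compat p q m hm) _
  case hcc =>
    simpa only [e] using FS.cseq_compat (A + p) (B + q) (FS.smul (cE 0) m) hsm

end ModSS

section Gen

variable {k : Type} [Field k] {SS : MultSS k} (FS : ModSS k SS)
variable {Atot : Type} [CommRing Atot] [Algebra k Atot]
variable (𝒜 : ℤ × ℤ → Submodule k Atot)
variable (φ : ∀ pq : ℤ × ℤ, 𝒜 pq →ₗ[k] SS.E 0 pq.1 pq.2)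

/-- The generating set attached to a finite list of homogeneous elements. -/
def genSet (L : List (Σ pq : ℤ × ℤ, FS.F 0 pq.1 pq.2)) (p q : ℤ) : Set (FS.F 0 p q) :=
  {x | ∃ s ∈ L, ∃ (pq' : ℤ × ℤ) (a : 𝒜 pq') (h1 : pq'.1 + s.1.1 = p) (h2 : pq'.2 + s.1.2 = q),
    x = cast (show ((FS.F 0 (pq'.1 + s.1.1) (pq'.2 + s.1.2) : Type) = FS.F 0 p q) by
      rw [h1, h2]) (FS.smul (φ pq' a) s.2)}

/-- The `𝒜`-invariant family generated by a finite list of homogeneous elements. -/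
def genF (L : List (Σ pq : ℤ × ℤ, FS.F 0 pq.1 pq.2)) (p q : ℤ) : Submodule k (FS.F 0 p q) :=
  Submodule.span k (genSet FS 𝒜 φ L p q)

theorem genF_mono {L L' : List (Σ pq : ℤ × ℤ, FS.F 0 pq.1 pq.2)}
    (h : ∀ s ∈ L, s ∈ L') (p q : ℤ) : genF FS 𝒜 φ L p q ≤ genF FS 𝒜 φ L' p q := by
  apply Submodule.span_mono
  rintro x ⟨s, hs, pq', a, h1, h2, rfl⟩
  exact ⟨s, h s hs, pq', a, h1, h2, rfl⟩

theorem self_mem_genF [GradedAlgebra 𝒜]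
    (hφone : ∀ h1 : (1 : Atot) ∈ 𝒜 (0, 0), φ (0, 0) ⟨1, h1⟩ = SS.one 0)
    (L : List (Σ pq : ℤ × ℤ, FS.F 0 pq.1 pq.2)) (s) (hs : s ∈ L) :
    s.2 ∈ genF FS 𝒜 φ L s.1.1 s.1.2 := by
  have h1 : (1 : Atot) ∈ 𝒜 (0, 0) := SetLike.one_mem_graded 𝒜
  refine Submodule.subset_span ⟨s, hs, (0, 0), ⟨1, h1⟩, zero_add _, zero_add _, ?_⟩
  rw [hφone h1]
  exact (cast_eq_iff_heq.mpr (FS.one_smul s.2)).symm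

theorem genF_inv [GradedAlgebra 𝒜]
    (hφmul : ∀ (pq pq' : ℤ × ℤ) (a : 𝒜 pq) (b : 𝒜 pq')
      (hab : (a : Atot) * (b : Atot) ∈ 𝒜 (pq + pq')),
      φ (pq + pq') ⟨(a : Atot) * b, hab⟩ = SS.mul (φ pq a) (φ pq' b))
    (L : List (Σ pq : ℤ × ℤ, FS.F 0 pq.1 pq.2)) :
    IsInvFamilyF1 k SS FS 𝒜 φ (genF FS 𝒜 φ L) := by
  intro pq a p q x hx
  refine Submodule.span_induction
    (p := fun u _ => FS.smul (φ pq a) u ∈ genF FS 𝒜 φ L (pq.1 + p) (pq.2 + q))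
    ?_ ?_ ?_ ?_ hx
  · rintro u ⟨s, hs, pq', b, h1, h2, rfl⟩
    subst h1; subst h2
    rw [cast_eq]
    have hmem : (a : Atot) * (b : Atot) ∈ 𝒜 (pq + pq') := SetLike.mul_mem_graded a.2 b.2
    have key : HEq (FS.smul (φ pq a) (FS.smul (φ pq' b) s.2))
        (FS.smul (φ (pq + pq') ⟨(a : Atot) * b, hmem⟩) s.2) := by
      rw [hφmul pq pq' a b hmem]
      exact (FS.mul_smul (φ pq a) (φ pq' b) s.2).symm
    refine Submodule.subset_span ⟨s, hs, pq + pq', ⟨(a : Atot) * b, hmem⟩,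
      add_assoc pq.1 pq'.1 s.1.1, add_assoc pq.2 pq'.2 s.1.2, ?_⟩
    exact (cast_eq_iff_heq.mpr key.symm).symm
  · show FS.smul (φ pq a) (0 : FS.F 0 p q) ∈ _
    rw [map_zero]; exact Submodule.zero_mem _
  · intro u v hu hv hu' hv'
    show FS.smul (φ pq a) (u + v) ∈ _
    rw [map_add]
    exact Submodule.add_mem _ hu' hv'
  · intro c u hu hu'
    show FS.smul (φ pq a) (c • u) ∈ _
    rw [map_smul]
    exact Submodule.smul_mem _ c hu'

theorem genF_le_Zinf
    (hperm : ∀ (pq : ℤ × ℤ) (a : 𝒜 pq), ∃ (c : ∀ s, SS.E s pq.1 pq.2)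
      (_ : ∀ s, ∃ h : SS.d s pq.1 pq.2 (c s) = 0,
        SS.proj s pq.1 pq.2 (c s) h = c (s + 1)), c 0 = φ pq a)
    (L : List (Σ pq : ℤ × ℤ, FS.F 0 pq.1 pq.2))
    (hL : ∀ s ∈ L, s.2 ∈ FS.Zinf s.1.1 s.1.2) (p q : ℤ) :
    genF FS 𝒜 φ L p q ≤ FS.Zinf p q := by
  rw [genF, Submodule.span_le]
  rintro x ⟨s, hs, pq', a, h1, h2, rfl⟩
  subst h1; subst h2
  rw [cast_eq]
  obtain ⟨cE, hcE, hc0⟩ := hperm pq' a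
  rw [← hc0]
  exact FS.Zinf_mem_smul pq'.1 pq'.2 s.1.1 s.1.2 cE hcE s.2 (hL s hs)

end Gen

end Aux

/-- **Finite generation lemma, part (b).**  If a module spectral sequence `Ẽ` over a
multiplicative spectral sequence `E` has Noetherian `E_1`-page over a bigraded commutative
algebra `𝒜` of even-total-degree permanent cycles acting through `φ : 𝒜 → E_1`, then
`Ẽ_∞` is a finitely generated `E_∞`-module. -/
theorem module_spectral_sequence_finitely_generated (SS : MultSS k) (FS : ModSS k SS)
    (Atot : Type) [CommRing Atot] [Algebra k Atot]
    (𝒜 : ℤ × ℤ → Submodule k Atot) [GradedAlgebra 𝒜]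
    (heven : ∀ pq : ℤ × ℤ, ¬ Even (pq.1 + pq.2) → 𝒜 pq = ⊥)
    (φ : ∀ pq : ℤ × ℤ, 𝒜 pq →ₗ[k] SS.E 0 pq.1 pq.2)
    (hφone : ∀ h1 : (1 : Atot) ∈ 𝒜 (0, 0), φ (0, 0) ⟨1, h1⟩ = SS.one 0)
    (hφmul : ∀ (pq pq' : ℤ × ℤ) (a : 𝒜 pq) (b : 𝒜 pq')
      (hab : (a : Atot) * (b : Atot) ∈ 𝒜 (pq + pq')),
      φ (pq + pq') ⟨(a : Atot) * b, hab⟩ = SS.mul (φ pq a) (φ pq' b))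
    -- the image of `φ` consists of permanent cycles
    (hperm : ∀ (pq : ℤ × ℤ) (a : 𝒜 pq), ∃ (c : ∀ s, SS.E s pq.1 pq.2)
      (hc : ∀ s, ∃ h : SS.d s pq.1 pq.2 (c s) = 0,
        SS.proj s pq.1 pq.2 (c s) h = c (s + 1)), c 0 = φ pq a)
    -- `Ẽ_1` is a Noetherian `𝒜`-module
    (hNoethF : ∀ (ch : ℕ → ∀ p q : ℤ, Submodule k (FS.F 0 p q)),
      (∀ n, IsInvFamilyF1 k SS FS 𝒜 φ (ch n)) →
      (∀ n p q, ch n p q ≤ ch (n + 1) p q) →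
      ∃ n₀, ∀ n, n₀ ≤ n → ch n = ch n₀) :
    -- conclusion: `Ẽ_∞` is a finitely generated `E_∞`-module
    ∃ (n : ℕ) (pi qi : Fin n → ℤ) (y : ∀ i, FS.Finf (pi i) (qi i)),
      ∀ (p q : ℤ) (x : FS.Finf p q),
        x ∈ Submodule.span k {z : FS.Finf p q |
          ∃ (i : Fin n) (p' q' : ℤ) (e : SS.Einf p' q')
            (h1 : p' + pi i = p) (h2 : q' + qi i = q),
            z = cast (by rw [h1, h2] : (FS.Finf (p' + pi i) (q' + qi i) : Type) = FS.Finf p q)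
              (FS.smulInf e (y i))} := by
  classical
  let ext : List (Σ pq : ℤ × ℤ, FS.F 0 pq.1 pq.2) → Prop := fun L =>
    ∃ s : Σ pq : ℤ × ℤ, FS.F 0 pq.1 pq.2,
      s.2 ∈ FS.Zinf s.1.1 s.1.2 ∧ s.2 ∉ genF FS 𝒜 φ L s.1.1 s.1.2
  let nxt : List (Σ pq : ℤ × ℤ, FS.F 0 pq.1 pq.2) → List (Σ pq : ℤ × ℤ, FS.F 0 pq.1 pq.2) :=
    fun L => if h : ext L then h.choose :: L else L
  let Ls : ℕ → List (Σ pq : ℤ × ℤ, FS.F 0 pq.1 pq.2) :=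
    fun n => Nat.rec [] (fun _ L => nxt L) n
  have hLs_succ : ∀ n, Ls (n + 1) = nxt (Ls n) := fun n => rfl
  have hGood : ∀ n, ∀ s ∈ Ls n, s.2 ∈ FS.Zinf s.1.1 s.1.2 := by
    intro n
    induction n with
    | zero => intro s hs; exact absurd hs List.not_mem_nil
    | succ n ih =>
      intro s hs
      rw [hLs_succ] at hs
      by_cases h : ext (Ls n)
      · rw [show nxt (Ls n) = h.choose :: Ls n from dif_pos h] at hs
        rcases List.mem_cons.mp hs with h' | h'
        · subst h'; exact h.choose_spec.1
        · exact ih s h'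
      · rw [show nxt (Ls n) = Ls n from dif_neg h] at hs; exact ih s hs
  have hmono : ∀ n, ∀ s ∈ Ls n, s ∈ Ls (n + 1) := by
    intro n s hs
    rw [hLs_succ]
    by_cases h : ext (Ls n)
    · rw [show nxt (Ls n) = h.choose :: Ls n from dif_pos h]
      exact List.mem_cons_of_mem _ hs
    · rwa [show nxt (Ls n) = Ls n from dif_neg h]
  obtain ⟨n₀, hstab⟩ := hNoethF (fun n => genF FS 𝒜 φ (Ls n))
    (fun n => genF_inv FS 𝒜 φ hφmul (Ls n))
    (fun n p q => genF_mono FS 𝒜 φ (hmono n) p q)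
  have hnotext : ¬ ext (Ls n₀) := by
    intro h
    have hL1 : Ls (n₀ + 1) = h.choose :: Ls n₀ := by rw [hLs_succ]; exact dif_pos h
    have hmem : h.choose.2 ∈ genF FS 𝒜 φ (Ls (n₀ + 1)) h.choose.1.1 h.choose.1.2 := by
      rw [hL1]
      exact self_mem_genF FS 𝒜 φ hφone _ _ List.mem_cons_self
    have h2 : genF FS 𝒜 φ (Ls (n₀ + 1)) = genF FS 𝒜 φ (Ls n₀) := hstab (n₀ + 1) (Nat.le_succ n₀)
    rw [h2] at hmem
    exact h.choose_spec.2 hmem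
  have hgen : ∀ (p q : ℤ) (m : FS.F 0 p q), m ∈ FS.Zinf p q →
      m ∈ genF FS 𝒜 φ (Ls n₀) p q := by
    intro p q m hm
    by_contra hcon
    exact hnotext ⟨⟨(p, q), m⟩, hm, hcon⟩
  refine ⟨(Ls n₀).length, fun i => ((Ls n₀).get i).1.1, fun i => ((Ls n₀).get i).1.2,
    fun i => FS.PhiF _ _ ((Ls n₀).get i).2 (hGood n₀ _ ((Ls n₀).get_mem _)), ?_⟩
  intro p q x
  obtain ⟨c, hc, rfl⟩ := FS.pinfF_surjective p q x
  have hm : ∀ r, ∃ z, FS.Surv p q r (c 0) z := fun r => ⟨c r, FS.Surv_of_compat p q c hc r⟩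
  rw [FS.PhiF_eq p q c hc hm]
  have hspan : c 0 ∈ genF FS 𝒜 φ (Ls n₀) p q := hgen p q (c 0) hm
  suffices hsuf : ∃ hw : ∀ r, ∃ z, FS.Surv p q r (c 0) z,
      FS.PhiF p q (c 0) hw ∈ Submodule.span k {z : FS.Finf p q |
        ∃ (i : Fin (Ls n₀).length) (p' q' : ℤ) (e : SS.Einf p' q')
          (h1 : p' + ((Ls n₀).get i).1.1 = p) (h2 : q' + ((Ls n₀).get i).1.2 = q),
          z = cast (by rw [h1, h2] :
              (FS.Finf (p' + ((Ls n₀).get i).1.1) (q' + ((Ls n₀).get i).1.2) : Type)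
                = FS.Finf p q)
            (FS.smulInf e (FS.PhiF _ _ ((Ls n₀).get i).2
              (hGood n₀ _ ((Ls n₀).get_mem _))))} by
    exact hsuf.choose_spec
  refine Submodule.span_induction
    (p := fun w _ => ∃ hw : ∀ r, ∃ z, FS.Surv p q r w z,
      FS.PhiF p q w hw ∈ Submodule.span k {z : FS.Finf p q |
        ∃ (i : Fin (Ls n₀).length) (p' q' : ℤ) (e : SS.Einf p' q')
          (h1 : p' + ((Ls n₀).get i).1.1 = p) (h2 : q' + ((Ls n₀).get i).1.2 = q),
          z = cast (by rw [h1, h2] :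
              (FS.Finf (p' + ((Ls n₀).get i).1.1) (q' + ((Ls n₀).get i).1.2) : Type)
                = FS.Finf p q)
            (FS.smulInf e (FS.PhiF _ _ ((Ls n₀).get i).2
              (hGood n₀ _ ((Ls n₀).get_mem _))))})
    ?_ ?_ ?_ ?_ hspan
  · -- mem case
    rintro w ⟨s, hs, pq', a, h1, h2, rfl⟩
    obtain ⟨i, hi⟩ := List.mem_iff_get.mp hs
    subst hi
    subst h1; subst h2
    rw [cast_eq]
    obtain ⟨cE, hcE, hc0⟩ := hperm pq' a
    rw [← hc0]
    have hws : ∀ r, ∃ z, FS.Surv (pq'.1 + ((Ls n₀).get i).1.1) (pq'.2 + ((Ls n₀).get i).1.2) r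
        (FS.smul (cE 0) ((Ls n₀).get i).2) z :=
      FS.Zinf_mem_smul pq'.1 pq'.2 _ _ cE hcE _ (hGood n₀ _ hs)
    refine ⟨hws, ?_⟩
    rw [FS.PhiF_smul pq'.1 pq'.2 _ _ cE hcE ((Ls n₀).get i).2 (hGood n₀ _ hs) hws]
    refine Submodule.subset_span ⟨i, pq'.1, pq'.2, SS.pinf pq'.1 pq'.2 cE hcE, rfl, rfl, ?_⟩
    exact (cast_eq _ _).symm
  · -- zero case
    refine ⟨fun r => ⟨0, FS.Surv_zero p q r⟩, ?_⟩
    rw [FS.PhiF_zero]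
    exact Submodule.zero_mem _
  · -- add case
    intro u v hu hv pu pv
    obtain ⟨hwu, hmu⟩ := pu
    obtain ⟨hwv, hmv⟩ := pv
    refine ⟨fun r => ⟨_, FS.Surv_add p q r u v _ _ (FS.cseq_surv p q u hwu r)
      (FS.cseq_surv p q v hwv r)⟩, ?_⟩
    rw [FS.PhiF_add p q u v hwu hwv]
    exact Submodule.add_mem _ hmu hmv
  · -- smul case
    intro a u hu pu
    obtain ⟨hwu, hmu⟩ := pu
    refine ⟨fun r => ⟨_, FS.Surv_smulk p q r a u _ (FS.cseq_surv p q u hwu r)⟩, ?_⟩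
    rw [FS.PhiF_smulk p q a u hwu]
    exact Submodule.smul_mem _ a hmu
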